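/- Fix ξ > 0 and let (η_n) be a sequence of thresholds with η₀(n) < η_n < η_max(n) for all large n and such that (η_n/η_max(n))^{2/(n+1)} → 1 as n → ∞. Then the miss probability P_M(n, r₁(n,η_n), r₂(n,η_n)) is asymptotically equivalent, as n → ∞, to (1/√π) · (Γ((n+1)/2)/Γ(n/2)) · √(2/(n+1)) · ∫_{(n+1)/(2 r₂(n,η_n)²)}^{(n+1)/(2 r₁(n,η_n)²)} t^{-1/2} e^{-t} dt. -/

import Mathlib

open Real MeasureTheory Filter
open Set

/-- Isotropic Gaussian density on ℝⁿ: `π^{-n/2} ξ^{-n} exp(-‖y‖²/ξ²)`. -/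
noncomputable def pG (ξ : ℝ) (n : ℕ) (y : EuclideanSpace ℝ (Fin n)) : ℝ :=
  (π ^ ((n : ℝ) / 2) * ξ ^ n)⁻¹ * Real.exp (-‖y‖ ^ 2 / ξ ^ 2)

/-- Isotropic Cauchy density on ℝⁿ: `Γ((n+1)/2) π^{-(n+1)/2} (1+‖y‖²)^{-(n+1)/2}`. -/
noncomputable def pC (n : ℕ) (y : EuclideanSpace ℝ (Fin n)) : ℝ :=
  Real.Gamma (((n : ℝ) + 1) / 2) / π ^ (((n : ℝ) + 1) / 2) *
    (1 + ‖y‖ ^ 2) ^ (-(((n : ℝ) + 1) / 2))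

/-- Likelihood ratio `ℓ_n(r) = (√π/(Γ((n+1)/2) ξⁿ)) e^{-r²/ξ²} (1+r²)^{(n+1)/2}`. -/
noncomputable def ell (ξ : ℝ) (n : ℕ) (r : ℝ) : ℝ :=
  Real.sqrt π / (Real.Gamma (((n : ℝ) + 1) / 2) * ξ ^ n) *
    Real.exp (-r ^ 2 / ξ ^ 2) * (1 + r ^ 2) ^ (((n : ℝ) + 1) / 2)

/-- `η₀(n) = ℓ_n(0)`. -/
noncomputable def eta0 (ξ : ℝ) (n : ℕ) : ℝ := ell ξ n 0

/-- `η_max(n) = sup_{r ≥ 0} ℓ_n(r)`. -/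
noncomputable def etaMax (ξ : ℝ) (n : ℕ) : ℝ := sSup (ell ξ n '' Set.Ici 0)

/-- Miss probability: integral of the Cauchy density over the annulus `a ≤ ‖y‖ ≤ b`. -/
noncomputable def PM (n : ℕ) (a b : ℝ) : ℝ :=
  ∫ y in {y : EuclideanSpace ℝ (Fin n) | a ≤ ‖y‖ ∧ ‖y‖ ≤ b}, pC n y

/-- False-alarm probability: 1 minus the Gaussian mass of the annulus `a ≤ ‖y‖ ≤ b`. -/
noncomputable def PF (ξ : ℝ) (n : ℕ) (a b : ℝ) : ℝ :=
  1 - ∫ y in {y : EuclideanSpace ℝ (Fin n) | a ≤ ‖y‖ ∧ ‖y‖ ≤ b}, pG ξ n y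

/-- The Gaussian Q-function `Q(x) = ∫_x^∞ (2π)^{-1/2} e^{-t²/2} dt`. -/
noncomputable def Qfun (x : ℝ) : ℝ :=
  ∫ t in Set.Ici x, (Real.sqrt (2 * π))⁻¹ * Real.exp (-t ^ 2 / 2)

lemma Apos (ξ : ℝ) (hξ : 0 < ξ) (n : ℕ) :
    0 < Real.sqrt π / (Real.Gamma (((n : ℝ) + 1) / 2) * ξ ^ n) := by
  apply div_pos (Real.sqrt_pos.mpr Real.pi_pos)
  exact mul_pos (Real.Gamma_pos_of_pos (by positivity)) (pow_pos hξ n)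

lemma ell_eq (ξ : ℝ) (n : ℕ) (r : ℝ) :
    ell ξ n r = Real.sqrt π / (Real.Gamma (((n : ℝ) + 1) / 2) * ξ ^ n) *
      Real.exp (-r ^ 2 / ξ ^ 2 + ((n : ℝ) + 1) / 2 * Real.log (1 + r ^ 2)) := by
  have h1 : (0:ℝ) < 1 + r ^ 2 := by positivity
  rw [ell, Real.rpow_def_of_pos h1, mul_assoc, ← Real.exp_add]
  congr 1
  ring

/-- Key concavity-type inequality: `p log x - x/c ≤ p log M - M/c` when `p*c = M`. -/

lemma key_ineq {p M x c : ℝ} (hp : 0 < p) (hM : 0 < M) (hx : 0 < x) (hc : 0 < c)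
    (hpc : p * c = M) :
    p * Real.log x - x / c ≤ p * Real.log M - M / c := by
  have hlog : Real.log (x / M) ≤ x / M - 1 := Real.log_le_sub_one_of_pos (by positivity)
  rw [Real.log_div (ne_of_gt hx) (ne_of_gt hM)] at hlog
  have h1 : p * (Real.log x - Real.log M) ≤ p * (x / M - 1) :=
    mul_le_mul_of_nonneg_left hlog hp.le
  have h2 : p * (x / M - 1) = x / c - M / c := by
    field_simp
    nlinarith [hpc]
  linarith [h1, h2.le, h2.ge]

lemma exponent_le (ξ : ℝ) (hξ : 0 < ξ) (n : ℕ) (hM : 1 ≤ ((n : ℝ) + 1) * ξ ^ 2 / 2) (r : ℝ) :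
    -r ^ 2 / ξ ^ 2 + ((n : ℝ) + 1) / 2 * Real.log (1 + r ^ 2) ≤
      -(((n : ℝ) + 1) * ξ ^ 2 / 2 - 1) / ξ ^ 2 +
        ((n : ℝ) + 1) / 2 * Real.log (((n : ℝ) + 1) * ξ ^ 2 / 2) := by
  have hξ2 : (0:ℝ) < ξ ^ 2 := by positivity
  have h := key_ineq (p := ((n : ℝ) + 1) / 2) (M := ((n : ℝ) + 1) * ξ ^ 2 / 2)
    (x := 1 + r ^ 2) (c := ξ ^ 2) (by positivity) (lt_of_lt_of_le one_pos hM)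
    (by positivity) hξ2 (by ring)
  have e1 : -r ^ 2 / ξ ^ 2 = -(1 + r^2) / ξ^2 + 1/ξ^2 := by field_simp; ring
  have e2 : -(((n : ℝ) + 1) * ξ ^ 2 / 2 - 1) / ξ ^ 2
      = -((((n : ℝ) + 1) * ξ ^ 2 / 2)) / ξ^2 + 1/ξ^2 := by field_simp; ring
  rw [e1, e2]
  have e3 : -(1 + r^2) / ξ^2 = -((1 + r^2) / ξ^2) := by ring
  have e4 : -((((n : ℝ) + 1) * ξ ^ 2 / 2)) / ξ^2 = -((((n : ℝ) + 1) * ξ ^ 2 / 2) / ξ^2) := by ring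
  rw [e3, e4]
  linarith [h]

lemma ell_le (ξ : ℝ) (hξ : 0 < ξ) (n : ℕ) (hM : 1 ≤ ((n : ℝ) + 1) * ξ ^ 2 / 2) (r : ℝ) :
    ell ξ n r ≤ ell ξ n (Real.sqrt (((n : ℝ) + 1) * ξ ^ 2 / 2 - 1)) := by
  have hsq : Real.sqrt (((n : ℝ) + 1) * ξ ^ 2 / 2 - 1) ^ 2 = ((n : ℝ) + 1) * ξ ^ 2 / 2 - 1 :=
    Real.sq_sqrt (by linarith)
  rw [ell_eq, ell_eq, hsq]
  apply mul_le_mul_of_nonneg_left _ (Apos ξ hξ n).le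
  apply Real.exp_le_exp.mpr
  have h1M : 1 + (((n : ℝ) + 1) * ξ ^ 2 / 2 - 1) = ((n : ℝ) + 1) * ξ ^ 2 / 2 := by ring
  rw [h1M]
  exact exponent_le ξ hξ n hM r

lemma etaMax_eq (ξ : ℝ) (hξ : 0 < ξ) (n : ℕ) (hM : 1 ≤ ((n : ℝ) + 1) * ξ ^ 2 / 2) :
    etaMax ξ n = ell ξ n (Real.sqrt (((n : ℝ) + 1) * ξ ^ 2 / 2 - 1)) := by
  apply IsGreatest.csSup_eq
  constructor
  · exact ⟨_, Real.sqrt_nonneg _, rfl⟩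
  · rintro y ⟨r, -, rfl⟩
    exact ell_le ξ hξ n hM r

lemma log_ratio (ξ : ℝ) (hξ : 0 < ξ) (n : ℕ) (hM : 1 ≤ ((n : ℝ) + 1) * ξ ^ 2 / 2)
    {r η : ℝ} (hr : ell ξ n r = η) :
    Real.log (η / etaMax ξ n) =
      ((n : ℝ) + 1) / 2 *
        (Real.log ((1 + r ^ 2) / (((n : ℝ) + 1) * ξ ^ 2 / 2)) -
          ((1 + r ^ 2) / (((n : ℝ) + 1) * ξ ^ 2 / 2) - 1)) := by
  have hM0 : (0:ℝ) < ((n : ℝ) + 1) * ξ ^ 2 / 2 := lt_of_lt_of_le one_pos hM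
  have hξ2 : (0:ℝ) < ξ ^ 2 := by positivity
  have hx : (0:ℝ) < 1 + r ^ 2 := by positivity
  have hA := Apos ξ hξ n
  rw [etaMax_eq ξ hξ n hM, ← hr, ell_eq, ell_eq,
    Real.sq_sqrt (by linarith : (0:ℝ) ≤ ((n : ℝ) + 1) * ξ ^ 2 / 2 - 1)]
  rw [mul_div_mul_left _ _ (ne_of_gt hA), ← Real.exp_sub, Real.log_exp]
  have h1M : 1 + (((n : ℝ) + 1) * ξ ^ 2 / 2 - 1) = ((n : ℝ) + 1) * ξ ^ 2 / 2 := by ring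
  rw [h1M, Real.log_div (ne_of_gt hx) (ne_of_gt hM0)]
  have hdiv : (1 + r ^ 2) / (((n : ℝ) + 1) * ξ ^ 2 / 2) - 1
      = (1 + r ^ 2 - ((n : ℝ) + 1) * ξ ^ 2 / 2) / (((n : ℝ) + 1) * ξ ^ 2 / 2) := by
    field_simp
  rw [hdiv]
  have hpM : ((n : ℝ) + 1) / 2 * ((1 + r ^ 2 - ((n : ℝ) + 1) * ξ ^ 2 / 2) / (((n : ℝ) + 1) * ξ ^ 2 / 2))
      = (1 + r ^ 2 - ((n : ℝ) + 1) * ξ ^ 2 / 2) / ξ ^ 2 := by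
    rw [mul_div_assoc', div_eq_div_iff (by positivity) (ne_of_gt hξ2)]
    ring
  rw [mul_sub, hpM]
  field_simp
  ring

lemma half_lt_of_log {s : ℝ} (hs : 0 < s)
    (h : Real.log (1/2) + 1/2 < Real.log s - (s - 1)) : 1/2 < s := by
  by_contra hle
  push_neg at hle
  have h2 : Real.log (2 * s) ≤ 2 * s - 1 := Real.log_le_sub_one_of_pos (by positivity)
  rw [Real.log_mul (by norm_num) (ne_of_gt hs)] at h2
  have hl2 : Real.log (1/2) = -Real.log 2 := by
    rw [one_div, Real.log_inv]
  rw [hl2] at h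
  linarith

noncomputable def Ffun (n : ℕ) (r : ℝ) : ℝ :=
  r ^ (n - 1) * (1 + r ^ 2) ^ (-(((n : ℝ) + 1) / 2))

noncomputable def Gfun (n : ℕ) (r : ℝ) : ℝ :=
  Real.exp (-((n : ℝ) + 1) / (2 * r ^ 2)) / r ^ 2

lemma Ffun_eq (n : ℕ) (hn : 1 ≤ n) {r : ℝ} (hr : 0 < r) :
    Ffun n r = Real.exp (-(((n : ℝ) + 1) / 2) * Real.log (1 + 1 / r ^ 2)) / r ^ 2 := by
  have hx : (0:ℝ) < 1 + r ^ 2 := by positivity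
  have hr2 : (0:ℝ) < r ^ 2 := by positivity
  have h1 : (1:ℝ) + 1 / r ^ 2 = (1 + r ^ 2) / r ^ 2 := by field_simp; ring
  have h2 : Real.exp (-(((n : ℝ) + 1) / 2) * Real.log (1 + 1 / r ^ 2))
      = ((1 + r ^ 2) / r ^ 2) ^ (-(((n : ℝ) + 1) / 2)) := by
    rw [h1, Real.rpow_def_of_pos (by positivity), mul_comm]
  have h3 : ((1 + r ^ 2) / r ^ 2 : ℝ) ^ (-(((n : ℝ) + 1) / 2))
      = (1 + r ^ 2) ^ (-(((n : ℝ) + 1) / 2)) * (r ^ 2 : ℝ) ^ ((((n : ℝ) + 1) / 2)) := by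
    rw [Real.div_rpow hx.le hr2.le, Real.rpow_neg hr2.le (((n : ℝ) + 1) / 2), div_inv_eq_mul]
  have h4 : ((r : ℝ) ^ 2) ^ ((((n : ℝ) + 1) / 2)) = r ^ (n + 1) := by
    rw [← Real.rpow_natCast r 2, ← Real.rpow_mul hr.le, ← Real.rpow_natCast r (n + 1)]
    congr 1
    push_cast
    ring
  have h5 : r ^ (n + 1) = r ^ (n - 1) * r ^ 2 := by
    rw [← pow_add]
    congr 1
    omega
  rw [h2, h3, h4, h5, Ffun]
  field_simp

lemma Gfun_eq (n : ℕ) {r : ℝ} (hr : 0 < r) :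
    Gfun n r = Real.exp (-(((n : ℝ) + 1) / 2) * (1 / r ^ 2)) / r ^ 2 := by
  rw [Gfun]
  congr 2
  field_simp

lemma Gfun_pos (n : ℕ) {r : ℝ} (hr : 0 < r) : 0 < Gfun n r := by
  rw [Gfun]; positivity

lemma Gfun_le_Ffun (n : ℕ) (hn : 1 ≤ n) {r : ℝ} (hr : 0 < r) : Gfun n r ≤ Ffun n r := by
  rw [Gfun_eq n hr, Ffun_eq n hn hr]
  have hu : (0:ℝ) < 1 / r ^ 2 := by positivity
  apply div_le_div_of_nonneg_right _ (by positivity)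
  · apply Real.exp_le_exp.mpr
    have hlog : Real.log (1 + 1 / r ^ 2) ≤ 1 / r ^ 2 := by
      have := Real.log_le_sub_one_of_pos (show (0:ℝ) < 1 + 1 / r ^ 2 by positivity)
      linarith
    have hp : (0:ℝ) ≤ ((n:ℝ)+1)/2 := by positivity
    nlinarith [mul_le_mul_of_nonneg_left hlog hp]

lemma Ffun_le (n : ℕ) (hn : 1 ≤ n) {r : ℝ} (hr : 0 < r) :
    Ffun n r ≤ Real.exp (((n : ℝ) + 1) / 2 * (1 / r ^ 2) ^ 2) * Gfun n r := by
  rw [Gfun_eq n hr, Ffun_eq n hn hr, ← mul_div_assoc, ← Real.exp_add]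
  apply div_le_div_of_nonneg_right _ (by positivity)
  · apply Real.exp_le_exp.mpr
    set u : ℝ := 1 / r ^ 2 with hu
    have hu0 : 0 < u := by positivity
    -- log(1+u) ≥ u/(1+u) ≥ u - u²
    have hlog : u / (1 + u) ≤ Real.log (1 + u) := by
      have h := Real.log_le_sub_one_of_pos (show (0:ℝ) < 1 / (1 + u) by positivity)
      rw [Real.log_div one_ne_zero (by positivity), Real.log_one] at h
      have : u / (1 + u) = 1 - 1 / (1 + u) := by field_simp; ring
      linarith
    have h2 : u - u ^ 2 ≤ u / (1 + u) := by
      rw [le_div_iff₀ (by positivity)]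
      nlinarith [pow_nonneg hu0.le 3]
    have hlog2 : u - u ^ 2 ≤ Real.log (1 + u) := le_trans h2 hlog
    have hp : (0:ℝ) ≤ ((n:ℝ)+1)/2 := by positivity
    nlinarith [mul_le_mul_of_nonneg_left hlog2 hp]

lemma const_eq (n : ℕ) (hn : 1 ≤ n) :
    (n : ℝ) * (Real.sqrt π ^ n / Real.Gamma ((n : ℝ) / 2 + 1)) *
      (Real.Gamma (((n : ℝ) + 1) / 2) / π ^ (((n : ℝ) + 1) / 2)) =
    2 * Real.Gamma (((n : ℝ) + 1) / 2) / (Real.sqrt π * Real.Gamma ((n : ℝ) / 2)) := by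
  have hπ : (0:ℝ) < π := Real.pi_pos
  have hs : Real.sqrt π = π ^ ((1:ℝ)/2) := Real.sqrt_eq_rpow π
  have h1 : Real.sqrt π ^ n = π ^ ((n : ℝ)/2) := by
    rw [hs, ← Real.rpow_natCast (π ^ ((1:ℝ)/2)) n, ← Real.rpow_mul hπ.le]
    congr 1; ring
  have h2 : π ^ (((n : ℝ) + 1) / 2) = π ^ ((n : ℝ)/2) * π ^ ((1:ℝ)/2) := by
    rw [← Real.rpow_add hπ]; congr 1; ring
  have h3 : Real.Gamma ((n : ℝ) / 2 + 1) = (n : ℝ)/2 * Real.Gamma ((n : ℝ)/2) := by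
    apply Real.Gamma_add_one
    have : (1:ℝ) ≤ (n:ℝ) := by exact_mod_cast hn
    positivity
  have hG2 : 0 < Real.Gamma ((n : ℝ)/2) := Real.Gamma_pos_of_pos (by
    have : (1:ℝ) ≤ (n:ℝ) := by exact_mod_cast hn
    positivity)
  have hπn : (0:ℝ) < π ^ ((n : ℝ)/2) := Real.rpow_pos_of_pos hπ _
  have hπh : (0:ℝ) < π ^ ((1:ℝ)/2) := Real.rpow_pos_of_pos hπ _
  have hn0 : (0:ℝ) < (n:ℝ) := by exact_mod_cast hn
  rw [h1, h2, h3, hs]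
  field_simp

lemma PM_eq (n : ℕ) (hn : 1 ≤ n) {a b : ℝ} (ha : 0 < a) (hab : a ≤ b) :
    PM n a b = 2 * Real.Gamma (((n : ℝ) + 1) / 2) / (Real.sqrt π * Real.Gamma ((n : ℝ) / 2)) *
      ∫ r in a..b, Ffun n r := by
  haveI : Nonempty (Fin n) := ⟨⟨0, hn⟩⟩
  haveI : Nontrivial (EuclideanSpace ℝ (Fin n)) := by
    apply Module.nontrivial_of_finrank_pos (R := ℝ)
    rw [finrank_euclideanSpace_fin]
    exact hn
  set c : ℝ := Real.Gamma (((n : ℝ) + 1) / 2) / π ^ (((n : ℝ) + 1) / 2) with hc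
  set g : ℝ → ℝ := fun r => c * (1 + r ^ 2) ^ (-(((n : ℝ) + 1) / 2)) with hg
  have hSmeas : MeasurableSet {y : EuclideanSpace ℝ (Fin n) | a ≤ ‖y‖ ∧ ‖y‖ ≤ b} := by
    have : {y : EuclideanSpace ℝ (Fin n) | a ≤ ‖y‖ ∧ ‖y‖ ≤ b}
        = (fun y : EuclideanSpace ℝ (Fin n) => ‖y‖) ⁻¹' (Icc a b) := rfl
    rw [this]
    exact measurable_norm measurableSet_Icc
  have hfun : (Set.indicator {y : EuclideanSpace ℝ (Fin n) | a ≤ ‖y‖ ∧ ‖y‖ ≤ b} (pC n))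
      = fun y => Set.indicator (Icc a b) g ‖y‖ := by
    funext y
    by_cases h : ‖y‖ ∈ Icc a b
    · rw [Set.indicator_of_mem h, Set.indicator_of_mem (by exact ⟨h.1, h.2⟩), pC]
    · rw [Set.indicator_of_notMem h, Set.indicator_of_notMem (by
        simpa [Set.mem_Icc] using h)]
  rw [PM, ← integral_indicator hSmeas, hfun,
    MeasureTheory.integral_fun_norm_addHaar volume (Set.indicator (Icc a b) g)]
  rw [finrank_euclideanSpace_fin]
  have hinner : ∫ y in Ioi (0:ℝ), y ^ (n - 1) • Set.indicator (Icc a b) g y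
      = c * ∫ r in a..b, Ffun n r := by
    have h1 : (fun y => y ^ (n - 1) • Set.indicator (Icc a b) g y)
        = Set.indicator (Icc a b) (fun y => c * Ffun n y) := by
      funext y
      by_cases h : y ∈ Icc a b
      · rw [Set.indicator_of_mem h, Set.indicator_of_mem h, smul_eq_mul, hg, Ffun]
        ring
      · rw [Set.indicator_of_notMem h, Set.indicator_of_notMem h, smul_zero]
    rw [h1, integral_indicator measurableSet_Icc, Measure.restrict_restrict measurableSet_Icc,
      (show Icc a b ∩ Ioi 0 = Icc a b from
        Set.inter_eq_self_of_subset_left (fun x hx => lt_of_lt_of_le ha hx.1)),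
      MeasureTheory.integral_Icc_eq_integral_Ioc, ← intervalIntegral.integral_of_le hab,
      intervalIntegral.integral_const_mul]
  rw [hinner]
  have hball : (volume (Metric.ball (0 : EuclideanSpace ℝ (Fin n)) 1)).toReal
      = Real.sqrt π ^ n / Real.Gamma ((n : ℝ) / 2 + 1) := by
    rw [EuclideanSpace.volume_ball]
    simp [Fintype.card_fin, ENNReal.toReal_ofReal (by positivity : (0:ℝ) ≤ Real.sqrt π ^ n / Real.Gamma ((n : ℝ) / 2 + 1))]
  rw [measureReal_def, hball, nsmul_eq_mul, smul_eq_mul]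
  rw [← const_eq n hn, hc]
  ring

lemma target_integral_eq (n : ℕ) {a b : ℝ} (ha : 0 < a) (hab : a < b) :
    ∫ t in (((n : ℝ) + 1) / (2 * b ^ 2))..(((n : ℝ) + 1) / (2 * a ^ 2)),
        t ^ (-(1 : ℝ) / 2) * Real.exp (-t)
      = Real.sqrt (2 * ((n : ℝ) + 1)) * ∫ r in a..b, Gfun n r := by
  set c : ℝ := (n : ℝ) + 1 with hcdef
  have hc : (0:ℝ) < c := by positivity
  set f : ℝ → ℝ := fun r => c / (2 * r ^ 2) with hf
  set f' : ℝ → ℝ := fun r => -c / r ^ 3 with hf'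
  set g : ℝ → ℝ := fun t => t ^ (-(1 : ℝ) / 2) * Real.exp (-t) with hgdef
  have huIcc : Set.uIcc a b = Icc a b := Set.uIcc_of_le hab.le
  have hmem_pos : ∀ x ∈ Set.uIcc a b, 0 < x := by
    intro x hx
    rw [huIcc] at hx
    exact lt_of_lt_of_le ha hx.1
  have hderiv : ∀ x ∈ Set.uIcc a b, HasDerivAt f (f' x) x := by
    intro x hx
    have hx0 : 0 < x := hmem_pos x hx
    have h1 : HasDerivAt (fun r : ℝ => 2 * r ^ 2) (2 * (2 * x ^ 1)) x :=
      (hasDerivAt_pow 2 x).const_mul 2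
    have h2 := (hasDerivAt_const x c).div h1 (by positivity)
    convert (show HasDerivAt f _ x from h2) using 1
    rw [hf']
    rw [div_eq_div_iff (by positivity) (by positivity)]
    ring
  have hcont' : ContinuousOn f' (Set.uIcc a b) := by
    apply ContinuousOn.div continuousOn_const (by fun_prop)
    intro x hx
    exact pow_ne_zero 3 (ne_of_gt (hmem_pos x hx))
  have hgcont : ContinuousOn g (f '' Set.uIcc a b) := by
    rintro t ⟨x, hx, rfl⟩
    have hx0 : 0 < x := hmem_pos x hx
    have hfx : 0 < f x := by rw [hf]; positivity
    apply ContinuousWithinAt.mul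
    · exact (Real.continuousAt_rpow_const _ _ (Or.inl (ne_of_gt hfx))).continuousWithinAt
    · exact (Real.continuous_exp.comp continuous_neg).continuousAt.continuousWithinAt
  have hsub := intervalIntegral.integral_comp_smul_deriv' hderiv hcont' hgcont
  have hfa : f a = c / (2 * a ^ 2) := rfl
  have hfb : f b = c / (2 * b ^ 2) := rfl
  rw [← hfa, ← hfb, intervalIntegral.integral_symm (f a) (f b), ← hsub,
    ← intervalIntegral.integral_neg]
  have hcong : ∀ x ∈ Set.uIcc a b, -(f' x • (g ∘ f) x) = Real.sqrt (2 * c) * Gfun n x := by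
    intro x hx
    have hx0 : 0 < x := hmem_pos x hx
    have hfx : 0 < f x := by rw [hf]; positivity
    have hrpow : (f x) ^ (-(1 : ℝ) / 2) = (Real.sqrt (f x))⁻¹ := by
      rw [show (-(1:ℝ)/2) = -(1/2) by ring, Real.rpow_neg hfx.le, ← Real.sqrt_eq_rpow]
    have hsq : Real.sqrt (f x) = Real.sqrt c / (Real.sqrt 2 * x) := by
      rw [hf]
      show Real.sqrt (c / (2 * x ^ 2)) = _
      rw [Real.sqrt_div hc.le, Real.sqrt_mul (by norm_num : (0:ℝ) ≤ 2), Real.sqrt_sq hx0.le]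
    have hinv : (Real.sqrt (f x))⁻¹ = Real.sqrt 2 * x / Real.sqrt c := by
      rw [hsq, inv_div]
    have hc2 : Real.sqrt (2 * c) = Real.sqrt 2 * Real.sqrt c :=
      Real.sqrt_mul (by norm_num) c
    have hcc : Real.sqrt c * Real.sqrt c = c := Real.mul_self_sqrt hc.le
    have hsc : Real.sqrt c ≠ 0 := ne_of_gt (Real.sqrt_pos.mpr hc)
    have hexp : -(f x) = -c / (2 * x ^ 2) := by rw [hf]; ring
    rw [smul_eq_mul, Function.comp_apply, hgdef]
    show -(f' x * ((f x) ^ (-(1:ℝ)/2) * Real.exp (-(f x)))) = _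
    rw [hrpow, hinv, hc2, hexp, Gfun, hf']
    have hcexp : -c / (2 * x ^ 2) = -((c:ℝ) + 0) / (2 * x^2) := by ring
    field_simp
    ring_nf
    rw [Real.sq_sqrt hc.le, hcdef]
    ring
  rw [intervalIntegral.integral_congr hcong, intervalIntegral.integral_const_mul]

lemma Ffun_continuous (n : ℕ) : Continuous (Ffun n) := by
  apply Continuous.mul (continuous_pow (n - 1))
  exact (continuous_const.add (continuous_pow 2)).rpow_const
    (fun x => Or.inl (show (1:ℝ) + x ^ 2 ≠ 0 by positivity))

lemma Gfun_continuousOn (n : ℕ) {a b : ℝ} (ha : 0 < a) (hab : a ≤ b) :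
    ContinuousOn (Gfun n) (Set.uIcc a b) := by
  have hpos : ∀ x ∈ Set.uIcc a b, 0 < x := by
    intro x hx
    rw [Set.uIcc_of_le hab] at hx
    exact lt_of_lt_of_le ha hx.1
  apply ContinuousOn.div
  · apply Continuous.comp_continuousOn Real.continuous_exp
    apply ContinuousOn.div continuousOn_const (by fun_prop)
    intro x hx
    have := hpos x hx
    positivity
  · fun_prop
  · intro x hx
    exact pow_ne_zero 2 (ne_of_gt (hpos x hx))

lemma intF (n : ℕ) (a b : ℝ) : IntervalIntegrable (Ffun n) volume a b :=
  (Ffun_continuous n).intervalIntegrable a b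

lemma intG (n : ℕ) {a b : ℝ} (ha : 0 < a) (hab : a ≤ b) :
    IntervalIntegrable (Gfun n) volume a b :=
  (Gfun_continuousOn n ha hab).intervalIntegrable

lemma IG_pos (n : ℕ) {a b : ℝ} (ha : 0 < a) (hab : a < b) :
    0 < ∫ r in a..b, Gfun n r := by
  apply intervalIntegral.intervalIntegral_pos_of_pos_on (intG n ha hab.le)
  · intro x hx
    exact Gfun_pos n (lt_trans ha hx.1)
  · exact hab

lemma IF_le (n : ℕ) (hn : 1 ≤ n) {a b : ℝ} (ha : 0 < a) (hab : a ≤ b) :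
    ∫ r in a..b, Ffun n r ≤
      Real.exp (((n : ℝ) + 1) / (2 * a ^ 4)) * ∫ r in a..b, Gfun n r := by
  rw [← intervalIntegral.integral_const_mul]
  apply intervalIntegral.integral_mono_on hab (intF n a b)
    ((intG n ha hab).const_mul _)
  intro x hx
  have hx0 : 0 < x := lt_of_lt_of_le ha hx.1
  refine (Ffun_le n hn hx0).trans ?_
  apply mul_le_mul_of_nonneg_right _ (Gfun_pos n hx0).le
  apply Real.exp_le_exp.mpr
  have h1 : (((n:ℝ)+1)/2) * (1 / x ^ 2) ^ 2 = ((n:ℝ)+1) / (2 * x ^ 4) := by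
    rw [div_pow, one_pow, div_mul_div_comm, mul_one]
    congr 1
    ring
  rw [h1]
  have h5 : a ^ 4 ≤ x ^ 4 := pow_le_pow_left₀ ha.le hx.1 4
  exact div_le_div_of_nonneg_left (by positivity) (by positivity) (by nlinarith)

lemma IG_le_IF (n : ℕ) (hn : 1 ≤ n) {a b : ℝ} (ha : 0 < a) (hab : a ≤ b) :
    ∫ r in a..b, Gfun n r ≤ ∫ r in a..b, Ffun n r := by
  apply intervalIntegral.integral_mono_on hab (intG n ha hab) (intF n a b)
  intro x hx
  exact Gfun_le_Ffun n hn (lt_of_lt_of_le ha hx.1)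

lemma eta0_pos (ξ : ℝ) (hξ : 0 < ξ) (n : ℕ) : 0 < eta0 ξ n := by
  rw [eta0, ell_eq]
  exact mul_pos (Apos ξ hξ n) (Real.exp_pos _)

/-- Under regime (R-i) (`(η_n/η_max(n))^{2/(n+1)} → 1`) the miss probability
is asymptotically equivalent to
`(1/√π)·(Γ((n+1)/2)/Γ(n/2))·√(2/(n+1))·∫_{(n+1)/(2r₂²)}^{(n+1)/(2r₁²)} t^{-1/2} e^{-t} dt`. -/
theorem miss_prob_incomplete_gamma_equivalence
    (ξ : ℝ) (hξ : 0 < ξ) (η : ℕ → ℝ)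
    (hrange : ∀ᶠ n : ℕ in atTop, eta0 ξ n < η n ∧ η n < etaMax ξ n)
    (hregime : Tendsto (fun n : ℕ => (η n / etaMax ξ n) ^ (2 / ((n : ℝ) + 1)))
      atTop (nhds 1))
    (r₁ r₂ : ℕ → ℝ)
    (hsol : ∀ᶠ n : ℕ in atTop, 0 < r₁ n ∧ r₁ n < r₂ n ∧
      ell ξ n (r₁ n) = η n ∧ ell ξ n (r₂ n) = η n) :
    Tendsto (fun n : ℕ => PM n (r₁ n) (r₂ n) /
        ((1 / Real.sqrt π) * (Real.Gamma (((n : ℝ) + 1) / 2) / Real.Gamma ((n : ℝ) / 2)) *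
          Real.sqrt (2 / ((n : ℝ) + 1)) *
          ∫ t in (((n : ℝ) + 1) / (2 * (r₂ n) ^ 2))..(((n : ℝ) + 1) / (2 * (r₁ n) ^ 2)),
            t ^ (-(1 : ℝ) / 2) * Real.exp (-t)))
      atTop (nhds 1) := by
  have hξ2 : (0:ℝ) < ξ ^ 2 := by positivity
  have hMtend : Tendsto (fun n : ℕ => ((n:ℝ)+1) * ξ^2 / 2) atTop atTop := by
    apply Tendsto.atTop_div_const (by norm_num : (0:ℝ) < 2)
    apply Tendsto.atTop_mul_const hξ2
    exact tendsto_atTop_add_const_right _ 1 tendsto_natCast_atTop_atTop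
  have hM_ev : ∀ᶠ n : ℕ in atTop, 1 ≤ ((n:ℝ)+1) * ξ^2 / 2 := hMtend.eventually_ge_atTop 1
  have hM4_ev : ∀ᶠ n : ℕ in atTop, 4 ≤ ((n:ℝ)+1) * ξ^2 / 2 := hMtend.eventually_ge_atTop 4
  have hn1 : ∀ᶠ n : ℕ in atTop, 1 ≤ n := eventually_ge_atTop 1
  -- log of the regime quantity tends to 0
  have hlog0 : Tendsto (fun n : ℕ =>
      Real.log ((η n / etaMax ξ n) ^ (2 / ((n:ℝ)+1)))) atTop (nhds 0) := by
    have h := (Real.continuousAt_log one_ne_zero).tendsto.comp hregime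
    simpa [Function.comp_def] using h
  have hhalf : ∀ᶠ n : ℕ in atTop, Real.log (1/2) + 1/2 <
      Real.log ((η n / etaMax ξ n) ^ (2 / ((n:ℝ)+1))) := by
    apply hlog0.eventually (eventually_gt_nhds ?_)
    have h2 := Real.log_two_gt_d9
    rw [show Real.log (1/2) = -Real.log 2 by rw [one_div, Real.log_inv]]
    linarith
  -- lower bound on r₁
  have hr1big : ∀ᶠ n : ℕ in atTop, ((n:ℝ)+1) * ξ^2 / 4 < 1 + (r₁ n)^2 := by
    filter_upwards [hM_ev, hrange, hsol, hhalf] with n hM hrg hs hh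
    have hη0 := eta0_pos ξ hξ n
    have hηpos : 0 < η n := lt_trans hη0 hrg.1
    have hmax : 0 < etaMax ξ n := lt_trans hηpos hrg.2
    have hdiv : 0 < η n / etaMax ξ n := div_pos hηpos hmax
    rw [Real.log_rpow hdiv] at hh
    have hkey := log_ratio ξ hξ n hM hs.2.2.1
    have hMpos : (0:ℝ) < ((n:ℝ)+1) * ξ^2 / 2 := lt_of_lt_of_le one_pos hM
    set s : ℝ := (1 + (r₁ n) ^ 2) / (((n:ℝ)+1) * ξ^2 / 2) with hsdef
    have hfac : 2 / ((n:ℝ)+1) * (((n:ℝ)+1)/2) = 1 := by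
      field_simp
    have hcalc : 2 / ((n:ℝ)+1) * Real.log (η n / etaMax ξ n)
        = Real.log s - (s - 1) := by
      rw [hkey, ← mul_assoc, hfac, one_mul]
    rw [hcalc] at hh
    have hs0 : 0 < s := by positivity
    have hgt := half_lt_of_log hs0 hh
    rw [hsdef, lt_div_iff₀ hMpos] at hgt
    linarith
  -- K n := (n+1)/(2 r₁⁴) tends to 0
  have hKtend : Tendsto (fun n : ℕ => ((n:ℝ)+1) / (2 * (r₁ n)^4)) atTop (nhds 0) := by
    have hub : ∀ᶠ n : ℕ in atTop,
        ((n:ℝ)+1) / (2 * (r₁ n)^4) ≤ 32 / (((n:ℝ)+1) * ξ^4) := by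
      filter_upwards [hM4_ev, hr1big, hsol] with n hM4 hbig hs
      have hr1 : 0 < r₁ n := hs.1
      have hsq : ((n:ℝ)+1) * ξ^2 / 8 ≤ (r₁ n)^2 := by nlinarith
      have hp4 : (((n:ℝ)+1) * ξ^2 / 8)^2 ≤ ((r₁ n)^2)^2 := by
        apply pow_le_pow_left₀ (by nlinarith) hsq
      rw [div_le_div_iff₀ (by positivity) (by positivity)]
      nlinarith [hp4]
    have hlb : ∀ᶠ n : ℕ in atTop, 0 ≤ ((n:ℝ)+1) / (2 * (r₁ n)^4) := by
      filter_upwards [hsol] with n hs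
      have := hs.1
      positivity
    apply squeeze_zero' hlb hub
    apply Tendsto.div_atTop tendsto_const_nhds
    apply Tendsto.atTop_mul_const (by positivity : (0:ℝ) < ξ^4)
    exact tendsto_atTop_add_const_right _ 1 tendsto_natCast_atTop_atTop
  have hexp1 : Tendsto (fun n : ℕ => Real.exp (((n:ℝ)+1) / (2 * (r₁ n)^4)))
      atTop (nhds 1) := by
    have := (Real.continuous_exp.tendsto 0).comp hKtend
    simpa [Function.comp_def] using this
  -- ratio identity
  have hratio : ∀ᶠ n : ℕ in atTop, PM n (r₁ n) (r₂ n) /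
        ((1 / Real.sqrt π) * (Real.Gamma (((n : ℝ) + 1) / 2) / Real.Gamma ((n : ℝ) / 2)) *
          Real.sqrt (2 / ((n : ℝ) + 1)) *
          ∫ t in (((n : ℝ) + 1) / (2 * (r₂ n) ^ 2))..(((n : ℝ) + 1) / (2 * (r₁ n) ^ 2)),
            t ^ (-(1 : ℝ) / 2) * Real.exp (-t))
      = (∫ r in r₁ n..r₂ n, Ffun n r) / (∫ r in r₁ n..r₂ n, Gfun n r) := by
    filter_upwards [hn1, hsol] with n hn hs
    obtain ⟨hr1, hlt, _, _⟩ := hs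
    rw [PM_eq n hn hr1 hlt.le, target_integral_eq n hr1 hlt]
    have hsq2 : Real.sqrt (2/((n:ℝ)+1)) * Real.sqrt (2*((n:ℝ)+1)) = 2 := by
      rw [← Real.sqrt_mul (by positivity)]
      rw [show (2/((n:ℝ)+1)) * (2*((n:ℝ)+1)) = 4 by field_simp; ring]
      rw [show (4:ℝ) = 2^2 by norm_num, Real.sqrt_sq (by norm_num)]
    have hGp : 0 < Real.Gamma (((n:ℝ)+1)/2) := Real.Gamma_pos_of_pos (by positivity)
    have hGH : 0 < Real.Gamma ((n:ℝ)/2) := Real.Gamma_pos_of_pos (by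
      have : (1:ℝ) ≤ (n:ℝ) := by exact_mod_cast hn
      positivity)
    have hsπ : 0 < Real.sqrt π := Real.sqrt_pos.mpr Real.pi_pos
    set C : ℝ := 2 * Real.Gamma (((n:ℝ)+1)/2) / (Real.sqrt π * Real.Gamma ((n:ℝ)/2)) with hC
    have hCpos : 0 < C := by rw [hC]; positivity
    have hD : (1 / Real.sqrt π) * (Real.Gamma (((n : ℝ) + 1) / 2) / Real.Gamma ((n : ℝ) / 2)) *
          Real.sqrt (2 / ((n : ℝ) + 1)) *
          (Real.sqrt (2*((n:ℝ)+1)) * ∫ r in r₁ n..r₂ n, Gfun n r)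
        = C * ∫ r in r₁ n..r₂ n, Gfun n r := by
      rw [hC]
      rw [show (1 / Real.sqrt π) * (Real.Gamma (((n : ℝ) + 1) / 2) / Real.Gamma ((n : ℝ) / 2)) *
          Real.sqrt (2 / ((n : ℝ) + 1)) *
          (Real.sqrt (2*((n:ℝ)+1)) * ∫ r in r₁ n..r₂ n, Gfun n r)
        = (Real.sqrt (2/((n:ℝ)+1)) * Real.sqrt (2*((n:ℝ)+1))) *
          ((1 / Real.sqrt π) * (Real.Gamma (((n : ℝ) + 1) / 2) / Real.Gamma ((n : ℝ) / 2)) *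
            ∫ r in r₁ n..r₂ n, Gfun n r) from by ring, hsq2]
      field_simp
    rw [hD, mul_div_mul_left _ _ (ne_of_gt hCpos)]
  -- squeeze
  apply tendsto_of_tendsto_of_tendsto_of_le_of_le' tendsto_const_nhds hexp1
  · filter_upwards [hratio, hn1, hsol] with n hr hn hs
    rw [hr]
    rw [one_le_div (IG_pos n hs.1 hs.2.1)]
    exact IG_le_IF n hn hs.1 hs.2.1.le
  · filter_upwards [hratio, hn1, hsol] with n hr hn hs
    rw [hr, div_le_iff₀ (IG_pos n hs.1 hs.2.1)]
    exact IF_le n hn hs.1 hs.2.1.le
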